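/- Let k be a field of characteristic zero and R = MvPowerSeries (Fin n) k with maximal ideal m = (X_1, …, X_n). Then a formal power series f has order ≥ b (i.e., f ∈ m^b) if and only if for every sequence of at most b−1 formal partial derivatives D_1, …, D_j (each some ∂/∂X_i, j ≤ b−1), the constant coefficient of D_1 ⋯ D_j f is zero. -/

import Mathlib

open MvPowerSeries

/-- Formal partial derivative with respect to the variable `i` on multivariate
formal power series. -/
noncomputable def psDeriv {k : Type*} [Field k] {n : ℕ} (i : Fin n)
    (f : MvPowerSeries (Fin n) k) : MvPowerSeries (Fin n) k :=
  fun d => (d i + 1 : ℕ) • MvPowerSeries.coeff (d + Finsupp.single i 1) f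

section Aux

variable {k : Type*} [Field k] {n : ℕ}

/-- degree of a multi-index -/
private def mdeg (d : Fin n →₀ ℕ) : ℕ := d.sum fun _ m => m

private lemma mdeg_add (d e : Fin n →₀ ℕ) : mdeg (d + e) = mdeg d + mdeg e := by
  simpa [mdeg] using Finsupp.sum_add_index' (fun _ => rfl) (fun _ _ _ => rfl)

private lemma mdeg_single (i : Fin n) : mdeg (Finsupp.single i 1) = 1 := by
  simp [mdeg, Finsupp.sum_single_index]

private lemma le_mdeg (d : Fin n →₀ ℕ) (i : Fin n) : d i ≤ mdeg d := by
  by_cases hi : d i = 0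
  · simp [hi]
  · exact Finset.single_le_sum (f := fun j => d j) (fun _ _ => Nat.zero_le _)
      (Finsupp.mem_support_iff.mpr hi)

private lemma one_le_mdeg {d : Fin n →₀ ℕ} (hd : d ≠ 0) : 1 ≤ mdeg d := by
  obtain ⟨i, hi⟩ := Finsupp.ne_iff.mp hd
  simp only [Finsupp.coe_zero, Pi.zero_apply] at hi
  calc 1 ≤ d i := Nat.one_le_iff_ne_zero.mpr hi
  _ ≤ mdeg d := le_mdeg d i

/-- The multi-index attached to a list of indices. -/
private noncomputable def lind (l : List (Fin n)) : Fin n →₀ ℕ := (l.map fun i => Finsupp.single i 1).sum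

private lemma lind_nil : lind ([] : List (Fin n)) = 0 := rfl

private lemma lind_cons (i : Fin n) (t : List (Fin n)) :
    lind (i :: t) = Finsupp.single i 1 + lind t := by
  simp [lind]

private lemma mdeg_lind (l : List (Fin n)) : mdeg (lind l) = l.length := by
  induction l with
  | nil => simp [lind_nil, mdeg]
  | cons i t ih => rw [lind_cons, mdeg_add, mdeg_single, ih, List.length_cons]; omega

private lemma lind_eq_msum (l : List (Fin n)) :
    lind l = ((l : Multiset (Fin n)).map fun i => Finsupp.single i 1).sum := by
  rw [lind, ← Multiset.sum_coe, Multiset.map_coe]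

private lemma lind_multiset (m : Multiset (Fin n)) : lind m.toList = Multiset.toFinsupp m := by
  rw [lind_eq_msum, Multiset.coe_toList]
  induction m using Multiset.induction_on with
  | empty => simp
  | cons a s ih =>
    rw [Multiset.map_cons, Multiset.sum_cons, ih, ← Multiset.singleton_add,
      Multiset.toFinsupp_add, Multiset.toFinsupp_singleton]

private lemma lind_surj (d : Fin n →₀ ℕ) :
    ∃ l : List (Fin n), lind l = d ∧ l.length = mdeg d := by
  classical
  refine ⟨(Finsupp.toMultiset d).toList, ?_, ?_⟩
  · rw [lind_multiset, Finsupp.toMultiset_toFinsupp]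
  · have := mdeg_lind (n := n) (Finsupp.toMultiset d).toList
    rw [lind_multiset, Finsupp.toMultiset_toFinsupp] at this
    omega

/-- coefficient of a derivative -/
private lemma coeff_psDeriv (i : Fin n) (f : MvPowerSeries (Fin n) k) (d : Fin n →₀ ℕ) :
    MvPowerSeries.coeff d (psDeriv i f) =
      (d i + 1 : ℕ) • MvPowerSeries.coeff (d + Finsupp.single i 1) f := rfl

/-- constant coefficient of iterated derivatives -/
private lemma coeff_foldl_psDeriv (l : List (Fin n)) (f : MvPowerSeries (Fin n) k)
    (d : Fin n →₀ ℕ) :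
    ∃ c : ℕ, 0 < c ∧ MvPowerSeries.coeff d (l.foldl (fun g i => psDeriv i g) f) =
      c • MvPowerSeries.coeff (d + lind l) f := by
  induction l generalizing f d with
  | nil => exact ⟨1, one_pos, by simp [lind_nil]⟩
  | cons i t ih =>
    obtain ⟨c, hc, hcoeff⟩ := ih (psDeriv i f) d
    refine ⟨c * ((d + lind t) i + 1), by positivity, ?_⟩
    rw [List.foldl_cons, hcoeff, coeff_psDeriv]
    rw [lind_cons, smul_smul]
    congr 1
    rw [add_comm (Finsupp.single i 1) (lind t), ← add_assoc]

private noncomputable def mIdeal (k : Type*) [Field k] (n : ℕ) : Ideal (MvPowerSeries (Fin n) k) :=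
  Ideal.span (Set.range fun i : Fin n => (X i : MvPowerSeries (Fin n) k))

private lemma constantCoeff_eq_zero_of_mem {g : MvPowerSeries (Fin n) k}
    (hg : g ∈ mIdeal k n) : constantCoeff g = 0 := by
  have : mIdeal k n ≤ RingHom.ker (constantCoeff) := by
    rw [mIdeal, Ideal.span_le]
    rintro _ ⟨i, rfl⟩
    simp [RingHom.mem_ker]
  simpa [RingHom.mem_ker] using this hg

/-- the auxiliary series collecting the terms of `f` divisible by `X i` with `i` minimal. -/
private noncomputable def auxG (f : MvPowerSeries (Fin n) k) (i : Fin n) :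
    MvPowerSeries (Fin n) k :=
  fun d => if ∀ j < i, d j = 0 then MvPowerSeries.coeff (d + Finsupp.single i 1) f else 0

private lemma coeff_auxG (f : MvPowerSeries (Fin n) k) (i : Fin n) (d : Fin n →₀ ℕ) :
    MvPowerSeries.coeff d (auxG f i) =
      if ∀ j < i, d j = 0 then MvPowerSeries.coeff (d + Finsupp.single i 1) f else 0 := rfl

private lemma decomp (f : MvPowerSeries (Fin n) k)
    (hf : constantCoeff f = 0) :
    f = ∑ i : Fin n, X i * auxG f i := by
  classical
  ext e
  rw [map_sum]
  have hterm : ∀ i : Fin n,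
      MvPowerSeries.coeff e (X i * auxG f i) =
        if (e i ≠ 0 ∧ ∀ j < i, e j = 0) then MvPowerSeries.coeff e f else 0 := by
    intro i
    rw [X_def, coeff_monomial_mul, one_mul]
    by_cases hle : Finsupp.single i 1 ≤ e
    · have hei : e i ≠ 0 := by
        have := hle i
        simp only [Finsupp.single_eq_same] at this
        omega
      rw [if_pos hle, coeff_auxG]
      have hsub : ∀ j : Fin n, j ≠ i → ((e - Finsupp.single i 1 : Fin n →₀ ℕ)) j = e j := by
        intro j hj
        rw [Finsupp.tsub_apply, Finsupp.single_apply, if_neg (fun h => hj h.symm),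
          Nat.sub_zero]
      by_cases hcond : ∀ j < i, e j = 0
      · have hcond' : ∀ j < i, ((e - Finsupp.single i 1 : Fin n →₀ ℕ)) j = 0 := fun j hj => by
          rw [hsub j (ne_of_lt hj)]; exact hcond j hj
        rw [if_pos hcond', if_pos ⟨hei, hcond⟩]
        rw [tsub_add_cancel_of_le hle]
      · have hcond' : ¬ ∀ j < i, ((e - Finsupp.single i 1 : Fin n →₀ ℕ)) j = 0 := by
          intro h
          exact hcond fun j hj => by rw [← hsub j (ne_of_lt hj)]; exact h j hj
        rw [if_neg hcond', if_neg (by tauto)]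
    · rw [if_neg hle, eq_comm, if_neg]
      rintro ⟨hei, -⟩
      apply hle
      intro j
      simp only [Finsupp.single_apply]
      by_cases hji : i = j
      · subst hji; simp; omega
      · simp [hji]
  rw [Finset.sum_congr rfl fun i _ => hterm i]
  by_cases he : e = 0
  · subst he
    rw [Finset.sum_eq_zero]
    · exact hf
    · intro i _
      rw [if_neg]
      rintro ⟨hei, -⟩
      simp at hei
  · -- exactly one index satisfies the predicate
    obtain ⟨i₀, hi₀⟩ := Finsupp.ne_iff.mp he
    simp only [Finsupp.coe_zero, Pi.zero_apply] at hi₀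
    have hne : (e.support : Finset (Fin n)).Nonempty := ⟨i₀, Finsupp.mem_support_iff.mpr hi₀⟩
    set m := e.support.min' hne with hm
    have hmem : e m ≠ 0 := Finsupp.mem_support_iff.mp (e.support.min'_mem hne)
    have hmin : ∀ j < m, e j = 0 := by
      intro j hj
      by_contra hje
      exact absurd (e.support.min'_le j (Finsupp.mem_support_iff.mpr hje)) (not_le.mpr hj)
    rw [Finset.sum_eq_single m]
    · rw [if_pos ⟨hmem, hmin⟩]
    · intro i _ hi
      rw [if_neg]
      rintro ⟨hei, hlt⟩
      rcases lt_or_gt_of_ne hi with h | h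
      · exact hei (hmin i h)
      · exact hmem (hlt m h)
    · intro h
      exact absurd (Finset.mem_univ m) h

private lemma mem_pow_iff (b : ℕ) (f : MvPowerSeries (Fin n) k) :
    f ∈ (mIdeal k n) ^ b ↔ ∀ d : Fin n →₀ ℕ, mdeg d < b → MvPowerSeries.coeff d f = 0 := by
  classical
  induction b generalizing f with
  | zero => simp
  | succ b ih =>
    constructor
    · intro hf
      rw [pow_succ] at hf
      refine Submodule.mul_induction_on hf ?_ ?_
      · intro x hx y hy d hd
        rw [MvPowerSeries.coeff_mul]
        apply Finset.sum_eq_zero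
        rintro ⟨p, q⟩ hpq
        rw [Finset.HasAntidiagonal.mem_antidiagonal] at hpq
        by_cases hq : q = 0
        · subst hq
          have : MvPowerSeries.coeff (0 : Fin n →₀ ℕ) y = 0 :=
            constantCoeff_eq_zero_of_mem hy
          simp [this]
        · have hdeg : mdeg p < b := by
            have h1 : 1 ≤ mdeg q := one_le_mdeg hq
            have h2 : mdeg p + mdeg q = mdeg d := by rw [← mdeg_add, hpq]
            omega
          rw [(ih x).mp hx p hdeg, zero_mul]
      · intro x y hx hy d hd
        rw [map_add, hx d hd, hy d hd, add_zero]
    · intro h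
      have hf0 : constantCoeff f = 0 := h 0 (by simp [mdeg])
      rw [decomp f hf0, pow_succ']
      apply Ideal.sum_mem
      intro i _
      apply Ideal.mul_mem_mul
      · exact Ideal.subset_span ⟨i, rfl⟩
      · rw [ih]
        intro d hd
        rw [coeff_auxG]
        split_ifs with hc
        · apply h
          rw [mdeg_add, mdeg_single]
          omega
        · rfl

end Aux

/-- order ≥ b for a power series iff all iterated formal partial
derivatives of order ≤ b−1 have vanishing constant coefficient. -/
theorem powerSeries_order_ge_iff_derivs_constantCoeff_eq_zero
    {k : Type*} [Field k] [CharZero k] (n b : ℕ) (hb : 1 ≤ b)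
    (f : MvPowerSeries (Fin n) k) :
    f ∈ (Ideal.span (Set.range fun i : Fin n => (X i : MvPowerSeries (Fin n) k))) ^ b ↔
      ∀ l : List (Fin n), l.length ≤ b - 1 →
        constantCoeff (l.foldl (fun g i => psDeriv i g) f) = 0 := by
  rw [show (Ideal.span (Set.range fun i : Fin n => (X i : MvPowerSeries (Fin n) k)))
      = mIdeal k n from rfl, mem_pow_iff]
  constructor
  · intro h l hl
    obtain ⟨c, hc, hcoeff⟩ := coeff_foldl_psDeriv l f 0
    rw [← MvPowerSeries.coeff_zero_eq_constantCoeff_apply, hcoeff, zero_add,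
      h (lind l) (by rw [mdeg_lind]; omega), smul_zero]
  · intro h d hd
    obtain ⟨l, hld, hlen⟩ := lind_surj d
    have hl : l.length ≤ b - 1 := by omega
    have := h l hl
    obtain ⟨c, hc, hcoeff⟩ := coeff_foldl_psDeriv l f 0
    rw [← MvPowerSeries.coeff_zero_eq_constantCoeff_apply, hcoeff, zero_add, hld] at this
    have hcne : (c : k) ≠ 0 := Nat.cast_ne_zero.mpr hc.ne'
    rw [nsmul_eq_mul] at this
    exact (mul_eq_zero.mp this).resolve_left hcne
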